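/- A Banach space X has the diametral strong diameter two property (DSD2P) if and only if X has the Daugavet property, i.e. if and only if every rank-one bounded linear operator T : X → X satisfies ‖Id − T‖ = 1 + ‖T‖. -/

import Mathlib

open Set

/-- The ballSlice `S(f, α)` of the closed unit ball of `X` determined by a functional `f`
and `α > 0`: the set of points `x` of the closed unit ball with `Re (f x) > 1 - α`. -/
def ballSlice {𝕜 : Type*} [RCLike 𝕜] {X : Type*} [NormedAddCommGroup X] [NormedSpace 𝕜 X]
    (f : X →L[𝕜] 𝕜) (α : ℝ) : Set X :=
  {x : X | ‖x‖ ≤ 1 ∧ 1 - α < RCLike.re (f x)}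

/-- `C` is a convex combination of slices of the closed unit ball of `X`:
`C = λ₁ S₁ + ⋯ + λₙ Sₙ` where `n ≥ 1`, each `Sᵢ = S(fᵢ, αᵢ)` is a ballSlice (with `‖fᵢ‖ = 1`,
`αᵢ > 0`), each `λᵢ > 0` and `∑ λᵢ = 1`. -/
def IsConvexCombOfSlices {𝕜 : Type*} [RCLike 𝕜] (X : Type*) [NormedAddCommGroup X]
    [NormedSpace 𝕜 X] (C : Set X) : Prop :=
  ∃ (n : ℕ), 0 < n ∧ ∃ (f : Fin n → (X →L[𝕜] 𝕜)) (α lam : Fin n → ℝ),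
    (∀ i, ‖f i‖ = 1) ∧ (∀ i, 0 < α i) ∧ (∀ i, 0 < lam i) ∧ (∑ i, lam i) = 1 ∧
    C = {x : X | ∃ y : Fin n → X, (∀ i, y i ∈ ballSlice (f i) (α i)) ∧
      x = ∑ i, (lam i : 𝕜) • y i}

/-- `X` has the diametral strong diameter two property (DSD2P): for every convex
combination of slices `C` of the closed unit ball, every `δ > 0` and every `x ∈ C`,
there is `y ∈ C` with `‖x - y‖ > 1 + ‖x‖ - δ`. -/
def DSD2P (𝕜 : Type*) [RCLike 𝕜] (X : Type*) [NormedAddCommGroup X]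
    [NormedSpace 𝕜 X] : Prop :=
  ∀ C : Set X, IsConvexCombOfSlices (𝕜 := 𝕜) X C →
    ∀ δ > (0 : ℝ), ∀ x ∈ C, ∃ y ∈ C, ‖x - y‖ > 1 + ‖x‖ - δ

section Helpers

variable {𝕜 : Type*} [RCLike 𝕜] {X : Type*} [NormedAddCommGroup X] [NormedSpace 𝕜 X]

/-- rotation: find unit scalar making `c * d` the (real) norm of `d`. -/
lemma exists_rot (d : 𝕜) : ∃ c : 𝕜, ‖c‖ = 1 ∧ c * d = (‖d‖ : 𝕜) := by
  rcases eq_or_ne d 0 with rfl | hd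
  · exact ⟨1, norm_one, by simp⟩
  · refine ⟨starRingEnd 𝕜 d / (‖d‖ : 𝕜), ?_, ?_⟩
    · rw [norm_div, RCLike.norm_conj, RCLike.norm_ofReal, abs_of_nonneg (norm_nonneg d),
        div_self (norm_ne_zero_iff.mpr hd)]
    · rw [div_mul_eq_mul_div, RCLike.conj_mul, sq, mul_div_assoc,
        div_self (by exact_mod_cast norm_ne_zero_iff.mpr hd), mul_one]

lemma neg_norm_le_re (z : 𝕜) : -‖z‖ ≤ RCLike.re z := by
  have := RCLike.re_le_norm (-z); simp at this; linarith

/-- extract an (almost) norming unit vector for an operator. -/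
lemma exists_unit_big {Y : Type*} [NormedAddCommGroup Y] [NormedSpace 𝕜 Y]
    (A : X →L[𝕜] Y) {c : ℝ} (h0 : 0 ≤ c) (hc : c < ‖A‖) :
    ∃ z : X, ‖z‖ = 1 ∧ c < ‖A z‖ := by
  by_contra h
  push_neg at h
  have : ‖A‖ ≤ c := by
    refine A.opNorm_le_bound h0 (fun x => ?_)
    rcases eq_or_ne x 0 with rfl | hx
    · simp
    · have hxn : (0:ℝ) < ‖x‖ := norm_pos_iff.mpr hx
      have h1 : ‖(((‖x‖⁻¹ : ℝ) : 𝕜)) • x‖ = 1 := by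
        rw [norm_smul, RCLike.norm_ofReal, abs_of_nonneg (by positivity)]
        field_simp
      have := h _ h1
      rw [map_smul, norm_smul, RCLike.norm_ofReal, abs_of_nonneg (by positivity)] at this
      have := (inv_mul_le_iff₀ hxn).mp this
      linarith [this]
  linarith

/-- nonemptyness of slices. -/
lemma exists_slice_point (f : X →L[𝕜] 𝕜) (hf : ‖f‖ = 1) {ε : ℝ} (hε : 0 < ε) :
    ∃ v : X, ‖v‖ ≤ 1 ∧ 1 - ε < RCLike.re (f v) := by
  set t : ℝ := 1 - min ε 2⁻¹ with ht
  have ht0 : 0 ≤ t := by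
    have : min ε 2⁻¹ ≤ 2⁻¹ := min_le_right _ _
    simp only [ht]; linarith
  have htlt : t < ‖f‖ := by
    rw [hf]; have : 0 < min ε 2⁻¹ := lt_min hε (by norm_num)
    simp only [ht]; linarith
  obtain ⟨z, hz1, hz⟩ := exists_unit_big f ht0 htlt
  obtain ⟨c, hc1, hcd⟩ := exists_rot (f z)
  refine ⟨c • z, ?_, ?_⟩
  · rw [norm_smul, hc1, one_mul, hz1]
  · rw [map_smul, smul_eq_mul, hcd, RCLike.ofReal_re]
    have : 1 - ε ≤ t := by
      have : min ε 2⁻¹ ≤ ε := min_le_left _ _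
      simp only [ht]; linarith
    linarith

/-- exact norming functional. -/
lemma exists_norming (v : X) (hv : v ≠ 0) :
    ∃ p : X →L[𝕜] 𝕜, ‖p‖ = 1 ∧ RCLike.re (p v) = ‖v‖ := by
  obtain ⟨g, hg1, hgv⟩ := exists_dual_vector 𝕜 v (norm_ne_zero_iff.mpr hv)
  exact ⟨g, hg1, by rw [hgv, RCLike.ofReal_re]⟩

lemma re_apply_le_norm (p : X →L[𝕜] 𝕜) (hp : ‖p‖ = 1) (x : X) : RCLike.re (p x) ≤ ‖x‖ :=
  (RCLike.re_le_norm _).trans (by simpa [hp] using p.le_opNorm x)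

lemma neg_norm_le_re_apply (p : X →L[𝕜] 𝕜) (hp : ‖p‖ = 1) (x : X) :
    -‖x‖ ≤ RCLike.re (p x) :=
  by
  have h1 := neg_norm_le_re (p x)
  have h2 : ‖p x‖ ≤ ‖x‖ := by simpa [hp] using p.le_opNorm x
  linarith

end Helpers

section Main

variable {𝕜 : Type*} [RCLike 𝕜] {X : Type*} [NormedAddCommGroup X] [NormedSpace 𝕜 X]

/-- The key point property `P`: every slice has points almost antipodal to any unit vector. -/
def PtProp (𝕜 : Type*) (X : Type*) [RCLike 𝕜] [NormedAddCommGroup X] [NormedSpace 𝕜 X] : Prop :=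
  ∀ f : X →L[𝕜] 𝕜, ‖f‖ = 1 → ∀ u : X, ‖u‖ = 1 → ∀ ε : ℝ, 0 < ε →
    ∃ w : X, ‖w‖ ≤ 1 ∧ 1 - ε < RCLike.re (f w) ∧ 2 - ε < ‖u - w‖

set_option maxHeartbeats 2000000 in
theorem dsd2p_to_ptProp (H : DSD2P 𝕜 X) : PtProp 𝕜 X := by
  intro f hf u hu ε hε
  -- normalize epsilon
  set ε' : ℝ := min ε 1 with hε'def
  have hε'pos : 0 < ε' := lt_min hε one_pos
  have hε'le1 : ε' ≤ 1 := min_le_right _ _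
  have hε'leε : ε' ≤ ε := min_le_left _ _
  set l : ℝ := ε' / 8 with hldef
  have hl0 : 0 < l := by positivity
  have hl8 : l ≤ 1 / 8 := by simp only [hldef]; linarith
  set δ : ℝ := l ^ 2 with hδdef
  have hδ0 : 0 < δ := by positivity
  have hδl : δ ≤ l := by nlinarith
  -- norming functional for u, and a point of the f-slice
  have hu0 : u ≠ 0 := by intro h; rw [h, norm_zero] at hu; norm_num at hu
  obtain ⟨h, hh1, hhu⟩ := exists_norming (𝕜 := 𝕜) u hu0
  obtain ⟨v₀, hv₀1, hv₀2⟩ := exists_slice_point f hf hε'pos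
  -- the convex combination of two slices
  set g : Fin 2 → (X →L[𝕜] 𝕜) := ![f, h] with hgdef
  set a : Fin 2 → ℝ := ![ε', 1] with hadef
  set ll : Fin 2 → ℝ := ![l, 1 - l] with hlldef
  set C : Set X := {x : X | ∃ y : Fin 2 → X, (∀ i, y i ∈ ballSlice (g i) (a i)) ∧
      x = ∑ i, (ll i : 𝕜) • y i} with hCdef
  have hC : IsConvexCombOfSlices (𝕜 := 𝕜) X C := by
    refine ⟨2, by norm_num, g, a, ll, ?_, ?_, ?_, ?_, rfl⟩
    · intro i; fin_cases i <;> simp [hgdef, hf, hh1]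
    · intro i; fin_cases i <;> simp [hadef] <;> linarith
    · intro i; fin_cases i <;> simp [hlldef] <;> linarith
    · rw [Fin.sum_univ_two]; simp [hlldef]
  set x₀ : X := ((l : ℝ) : 𝕜) • v₀ + (((1 - l : ℝ)) : 𝕜) • u with hx₀def
  have hux : u ∈ ballSlice h 1 := ⟨le_of_eq hu, by rw [hhu, hu]; norm_num⟩
  have hx₀C : x₀ ∈ C := by
    refine ⟨![v₀, u], ?_, ?_⟩
    · intro i; fin_cases i
      · exact ⟨hv₀1, by simpa [hgdef, hadef] using hv₀2⟩
      · simpa [hgdef, hadef] using hux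
    · rw [Fin.sum_univ_two]
      simp only [hlldef, Matrix.cons_val_zero, Matrix.cons_val_one, Matrix.head_cons]
      rfl
  have habs_l : |l| = l := abs_of_pos hl0
  have habs_l' : |1 - l| = 1 - l := abs_of_pos (by linarith)
  have hx₀le : ‖x₀‖ ≤ 1 := by
    have := norm_add_le (((l : ℝ) : 𝕜) • v₀) ((((1 - l : ℝ)) : 𝕜) • u)
    rw [norm_smul, norm_smul, RCLike.norm_ofReal, RCLike.norm_ofReal, habs_l, habs_l', hu] at this
    nlinarith
  have hx₀ge : 1 - 2 * l ≤ ‖x₀‖ := by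
    have hre : RCLike.re (h x₀) = l * RCLike.re (h v₀) + (1 - l) * RCLike.re (h u) := by
      simp only [hx₀def, map_add, map_smul, smul_eq_mul]
      rw [RCLike.re_ofReal_mul, RCLike.re_ofReal_mul]
    have h1 : -(1:ℝ) ≤ RCLike.re (h v₀) := by
      have := neg_norm_le_re_apply h hh1 v₀; linarith
    have h2 := re_apply_le_norm h hh1 x₀
    rw [hre, hhu, hu] at h2
    nlinarith
  obtain ⟨y, hyC, hxy⟩ := H C hC δ hδ0 x₀ hx₀C
  obtain ⟨w2, hw2, rfl⟩ := hyC
  have hw2sum : ∑ i, (ll i : 𝕜) • w2 i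
      = ((l : ℝ) : 𝕜) • w2 0 + (((1 - l : ℝ)) : 𝕜) • w2 1 := by
    rw [Fin.sum_univ_two]; simp [hlldef]
  set v : X := w2 0 with hvdef
  set w : X := w2 1 with hwdef
  have hvS : v ∈ ballSlice f ε' := by simpa [hgdef, hadef] using hw2 0
  have hwS : w ∈ ballSlice h 1 := by simpa [hgdef, hadef] using hw2 1
  -- the norming functional of x₀ - y
  have hMpos : (0:ℝ) < ‖x₀ - ∑ i, (ll i : 𝕜) • w2 i‖ := by
    have : (0:ℝ) ≤ ‖x₀‖ := norm_nonneg _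
    nlinarith [hxy]
  obtain ⟨p, hp1, hpe⟩ := exists_norming (𝕜 := 𝕜) _ (norm_pos_iff.mp hMpos)
  -- all the real quantities
  have hrepx₀ : RCLike.re (p x₀) = l * RCLike.re (p v₀) + (1 - l) * RCLike.re (p u) := by
    simp only [hx₀def, map_add, map_smul, smul_eq_mul]
    rw [RCLike.re_ofReal_mul, RCLike.re_ofReal_mul]
  have hrepy : RCLike.re (p (∑ i, (ll i : 𝕜) • w2 i))
      = l * RCLike.re (p v) + (1 - l) * RCLike.re (p w) := by
    rw [hw2sum]
    simp only [map_add, map_smul, smul_eq_mul]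
    rw [RCLike.re_ofReal_mul, RCLike.re_ofReal_mul]
  have hsub : RCLike.re (p (x₀ - ∑ i, (ll i : 𝕜) • w2 i))
      = RCLike.re (p x₀) - RCLike.re (p (∑ i, (ll i : 𝕜) • w2 i)) := by
    rw [map_sub, map_sub]
  have hRv0 : RCLike.re (p v₀) ≤ 1 := (re_apply_le_norm p hp1 v₀).trans hv₀1
  have hRu : RCLike.re (p u) ≤ 1 := (re_apply_le_norm p hp1 u).trans (le_of_eq hu)
  have hRv : -(1:ℝ) ≤ RCLike.re (p v) := by
    have := neg_norm_le_re_apply p hp1 v; have := hvS.1; linarith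
  have hRw : -(1:ℝ) ≤ RCLike.re (p w) := by
    have := neg_norm_le_re_apply p hp1 w; have := hwS.1; linarith
  have hpx₀ : RCLike.re (p x₀) ≤ ‖x₀‖ := re_apply_le_norm p hp1 x₀
  have hM : RCLike.re (p x₀) - (l * RCLike.re (p v) + (1 - l) * RCLike.re (p w))
      > 1 + ‖x₀‖ - δ := by
    rw [← hrepy, ← hsub, hpe]; exact hxy
  -- conclude
  have key1 : l * (-(RCLike.re (p v))) > l - δ := by nlinarith
  have key2 : (1 - l) * RCLike.re (p u) > 1 - 3 * l - δ := by nlinarith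
  have goal : RCLike.re (p u) - RCLike.re (p v) > 2 - ε' := by nlinarith
  refine ⟨v, hvS.1, by linarith [hvS.2], ?_⟩
  have : RCLike.re (p (u - v)) ≤ ‖u - v‖ := re_apply_le_norm p hp1 _
  rw [map_sub, map_sub] at this
  linarith

end Main

section Rank1

variable {𝕜 : Type*} [RCLike 𝕜] {X : Type*} [NormedAddCommGroup X] [NormedSpace 𝕜 X]

/-- A rank-one operator can be written as `z ↦ φ z • e` with `‖e‖ = 1` and `‖φ‖ = ‖T‖`. -/
lemma rank_one_repr (T : X →L[𝕜] X)
    (hT : Module.finrank 𝕜 (LinearMap.range (T : X →ₗ[𝕜] X)) = 1) :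
    ∃ (e : X) (φ : X →L[𝕜] 𝕜), ‖e‖ = 1 ∧ ‖φ‖ = ‖T‖ ∧ (∀ z, T z = φ z • e) := by
  rw [finrank_eq_one_iff'] at hT
  obtain ⟨v, hv0, hgen⟩ := hT
  have hv0' : (v : X) ≠ 0 := fun h => hv0 (Subtype.ext h)
  have hvnorm : (0:ℝ) < ‖(v:X)‖ := norm_pos_iff.mpr hv0'
  set e : X := ((‖(v:X)‖⁻¹ : ℝ) : 𝕜) • (v : X) with hedef
  have he1 : ‖e‖ = 1 := by
    rw [hedef, norm_smul, RCLike.norm_ofReal, abs_of_pos (by positivity)]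
    field_simp
  have he0 : e ≠ 0 := by
    intro h; rw [h, norm_zero] at he1; norm_num at he1
  have hrep : ∀ z : X, ∃ c : 𝕜, T z = c • e := by
    intro z
    obtain ⟨c, hc⟩ := hgen ⟨T z, LinearMap.mem_range_self _ z⟩
    refine ⟨c * ((‖(v:X)‖ : ℝ) : 𝕜), ?_⟩
    have : c • (v : X) = T z := congrArg Subtype.val hc
    rw [← this, hedef, smul_smul, mul_assoc,
      ← RCLike.ofReal_mul, mul_inv_cancel₀ (ne_of_gt hvnorm)]
    simp
  have huniq : ∀ (c c' : 𝕜), c • e = c' • e → c = c' := by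
    intro c c' hcc
    have : (c - c') • e = 0 := by rw [sub_smul, hcc, sub_self]
    rcases smul_eq_zero.mp this with h | h
    · exact sub_eq_zero.mp h
    · exact absurd h he0
  choose φf hφf using hrep
  have hadd : ∀ z z', φf (z + z') = φf z + φf z' := by
    intro z z'
    refine huniq _ _ ?_
    rw [← hφf, map_add, hφf, hφf, add_smul]
  have hsmul : ∀ (c : 𝕜) (z : X), φf (c • z) = c * φf z := by
    intro c z
    refine huniq _ _ ?_
    rw [← hφf, (T.map_smul c z : T (c • z) = c • T z), hφf, smul_smul]
  have hbound : ∀ z, ‖φf z‖ ≤ ‖T‖ * ‖z‖ := by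
    intro z
    have : ‖φf z‖ = ‖T z‖ := by rw [hφf z, norm_smul, he1, mul_one]
    rw [this]; exact T.le_opNorm z
  set φlin : X →ₗ[𝕜] 𝕜 :=
    { toFun := φf, map_add' := hadd, map_smul' := fun c z => by simpa using hsmul c z }
  set φ : X →L[𝕜] 𝕜 := φlin.mkContinuous ‖T‖ hbound with hφdef
  have hφ : ∀ z, φ z = φf z := fun z => rfl
  refine ⟨e, φ, he1, le_antisymm ?_ ?_, fun z => by rw [hφ, hφf]⟩
  · exact φ.opNorm_le_bound (norm_nonneg T) (fun z => by rw [hφ]; exact hbound z)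
  · refine T.opNorm_le_bound (norm_nonneg φ) (fun z => ?_)
    have : ‖T z‖ = ‖φ z‖ := by rw [hφ, hφf z, norm_smul, he1, mul_one]
    rw [this]; exact φ.le_opNorm z

end Rank1

section PtToDaugavet

variable {𝕜 : Type*} [RCLike 𝕜] {X : Type*} [NormedAddCommGroup X] [NormedSpace 𝕜 X]

lemma norm_sub_one_le {z : 𝕜} (hz : ‖z‖ ≤ 1) {η : ℝ} (hη : 0 < η)
    (h : 1 - η ^ 2 / 2 < RCLike.re z) : ‖z - 1‖ ≤ η := by
  have h1 : ‖z - (1:𝕜)‖ ^ 2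
      = RCLike.re z * RCLike.re z + RCLike.im z * RCLike.im z - 2 * RCLike.re z + 1 := by
    rw [RCLike.norm_sq_eq_def, map_sub, map_sub, RCLike.one_re, RCLike.one_im]
    ring
  have h2 : RCLike.re z * RCLike.re z + RCLike.im z * RCLike.im z ≤ 1 := by
    rw [← RCLike.norm_sq_eq_def]
    nlinarith [norm_nonneg z]
  have h3 : ‖z - (1:𝕜)‖ ^ 2 < η ^ 2 := by nlinarith
  exact (lt_of_pow_lt_pow_left₀ 2 hη.le h3).le

set_option maxHeartbeats 2000000 in
theorem ptProp_to_daugavet (hP : PtProp 𝕜 X) (T : X →L[𝕜] X)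
    (hT : Module.finrank 𝕜 (LinearMap.range (T : X →ₗ[𝕜] X)) = 1) :
    ‖ContinuousLinearMap.id 𝕜 X - T‖ = 1 + ‖T‖ := by
  obtain ⟨e, φ, he1, hφT, hrep⟩ := rank_one_repr T hT
  have ht0 : (0:ℝ) < ‖T‖ := by
    rcases (norm_nonneg T).lt_or_eq with h | h
    · exact h
    · exfalso
      have hT0 : T = 0 := norm_eq_zero.mp h.symm
      rw [hT0] at hT
      have : LinearMap.range ((0 : X →L[𝕜] X) : X →ₗ[𝕜] X) = ⊥ := by
        rw [ContinuousLinearMap.coe_zero, LinearMap.range_zero]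
      rw [this, finrank_bot] at hT
      norm_num at hT
  set t : ℝ := ‖T‖ with htdef
  set g : X →L[𝕜] 𝕜 := ((t⁻¹ : ℝ) : 𝕜) • φ with hgdef
  have hg1 : ‖g‖ = 1 := by
    rw [hgdef, norm_smul ((t⁻¹ : ℝ) : 𝕜) φ, RCLike.norm_ofReal, abs_of_pos (by positivity), hφT]
    field_simp
  have hφg : ∀ z, φ z = ((t : ℝ) : 𝕜) * g z := by
    intro z
    rw [hgdef, ContinuousLinearMap.smul_apply, smul_eq_mul, ← mul_assoc,
      ← RCLike.ofReal_mul, mul_inv_cancel₀ (ne_of_gt ht0)]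
    simp
  refine le_antisymm ?_ ?_
  · calc ‖ContinuousLinearMap.id 𝕜 X - T‖ ≤ ‖ContinuousLinearMap.id 𝕜 X‖ + ‖T‖ := norm_sub_le _ _
    _ ≤ 1 + ‖T‖ := by linarith [ContinuousLinearMap.norm_id_le (𝕜 := 𝕜) (E := X)]
  · refine le_of_forall_pos_le_add (fun δ hδ => ?_)
    set η : ℝ := min (δ / (2 * (t + 1))) 1 with hηdef
    have hη0 : 0 < η := lt_min (by positivity) one_pos
    have hη1 : η ≤ 1 := min_le_right _ _
    have hηδ : η * (t + 1) ≤ δ / 2 := by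
      have h1 : η ≤ δ / (2 * (t + 1)) := min_le_left _ _
      rw [le_div_iff₀ (by positivity)] at h1
      linarith
    set ε₁ : ℝ := min (η ^ 2 / 2) η with hε₁def
    have hε₁0 : 0 < ε₁ := lt_min (by positivity) hη0
    have hε₁η : ε₁ ≤ η := min_le_right _ _
    obtain ⟨v, hv1, hv2, hv3⟩ := hP g hg1 e he1 ε₁ hε₁0
    have hvne : e - v ≠ 0 := by
      intro h
      rw [h, norm_zero] at hv3
      linarith
    obtain ⟨q, hq1, hqe⟩ := exists_norming (𝕜 := 𝕜) (e - v) hvne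
    have hqe' : RCLike.re (q e) - RCLike.re (q v) = ‖e - v‖ := by
      rw [← hqe, map_sub q e v, map_sub]
    have hq_e : 1 - ε₁ < RCLike.re (q e) := by
      have h1 := neg_norm_le_re_apply q hq1 v
      have h2 := re_apply_le_norm q hq1 e
      rw [he1] at h2
      linarith
    have hq_v : RCLike.re (q v) < -(1 - ε₁) := by
      have h2 := re_apply_le_norm q hq1 e
      rw [he1] at h2
      linarith
    have hgv_norm : ‖g v‖ ≤ 1 := by
      have := g.le_opNorm v
      rw [hg1, one_mul] at this
      exact this.trans hv1
    have hgv1 : ‖g v - 1‖ ≤ η := by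
      refine norm_sub_one_le hgv_norm hη0 (lt_of_le_of_lt ?_ hv2)
      have : ε₁ ≤ η ^ 2 / 2 := min_le_left _ _
      linarith
    have hqenorm : ‖q e‖ ≤ 1 := by
      have := q.le_opNorm e
      rw [hq1, one_mul, he1] at this
      exact this
    have hre_gq : 1 - ε₁ - η ≤ RCLike.re (g v * q e) := by
      have heq : g v * q e = q e + (g v - 1) * q e := by ring
      have h1 : RCLike.re (g v * q e) = RCLike.re (q e) + RCLike.re ((g v - 1) * q e) := by
        rw [heq, map_add]
      have h2 := neg_norm_le_re ((g v - 1) * q e)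
      have h3 : ‖(g v - 1) * q e‖ ≤ η := by
        rw [norm_mul]
        calc ‖g v - 1‖ * ‖q e‖ ≤ η * 1 := by
              exact mul_le_mul hgv1 hqenorm (norm_nonneg _) hη0.le
        _ = η := mul_one η
      linarith
    have hTv : (ContinuousLinearMap.id 𝕜 X - T) (-v) = φ v • e - v := by
      rw [ContinuousLinearMap.sub_apply, ContinuousLinearMap.id_apply, map_neg, hrep v]
      abel
    have hre_main : RCLike.re (q (φ v • e - v)) = t * RCLike.re (g v * q e) - RCLike.re (q v) := by
      rw [map_sub, map_sub, map_smul, smul_eq_mul, hφg v, mul_assoc, RCLike.re_ofReal_mul]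
    have hlow : 1 + t - δ ≤ RCLike.re (q (φ v • e - v)) := by
      rw [hre_main]
      have ht1 : t * (1 - ε₁ - η) ≤ t * RCLike.re (g v * q e) :=
        mul_le_mul_of_nonneg_left hre_gq ht0.le
      have h5 : (t + 1) * ε₁ ≤ (t + 1) * η :=
        mul_le_mul_of_nonneg_left hε₁η (by positivity)
      have h6 : t * η ≤ (t + 1) * η := mul_le_mul_of_nonneg_right (by linarith) hη0.le
      linarith
    have hup : RCLike.re (q (φ v • e - v)) ≤ ‖ContinuousLinearMap.id 𝕜 X - T‖ := by
      have h1 : RCLike.re (q (φ v • e - v)) ≤ ‖φ v • e - v‖ := by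
        have := re_apply_le_norm q hq1 (φ v • e - v)
        exact this
      have h2 : ‖φ v • e - v‖ ≤ ‖ContinuousLinearMap.id 𝕜 X - T‖ := by
        rw [← hTv]
        have := (ContinuousLinearMap.id 𝕜 X - T).le_opNorm (-v)
        rw [norm_neg] at this
        refine this.trans ?_
        exact mul_le_of_le_one_right (norm_nonneg _) hv1
      linarith
    linarith

end PtToDaugavet

section DaugavetToPt

variable {𝕜 : Type*} [RCLike 𝕜] {X : Type*} [NormedAddCommGroup X] [NormedSpace 𝕜 X]

set_option maxHeartbeats 1000000 in
theorem daugavet_to_ptProp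
    (hD : ∀ T : X →L[𝕜] X, Module.finrank 𝕜 (LinearMap.range (T : X →ₗ[𝕜] X)) = 1 →
        ‖ContinuousLinearMap.id 𝕜 X - T‖ = 1 + ‖T‖) :
    PtProp 𝕜 X := by
  intro f hf u hu ε hε
  set ε' : ℝ := min ε 1 / 2 with hε'def
  have hε'0 : 0 < ε' := by
    have : 0 < min ε 1 := lt_min hε one_pos
    simp only [hε'def]; linarith
  have hε'le : 2 * ε' ≤ ε := by
    have : min ε 1 ≤ ε := min_le_left _ _
    simp only [hε'def]; linarith
  have hε'half : ε' ≤ 1 / 2 := by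
    have : min ε 1 ≤ 1 := min_le_right _ _
    simp only [hε'def]; linarith
  have hu0 : u ≠ 0 := fun h => by rw [h, norm_zero] at hu; norm_num at hu
  set T : X →L[𝕜] X := f.smulRight u with hTdef
  have hTapp : ∀ z, T z = f z • u := fun z => rfl
  have hrange : LinearMap.range (T : X →ₗ[𝕜] X) = Submodule.span 𝕜 {u} := by
    apply le_antisymm
    · rintro x ⟨z, rfl⟩
      exact Submodule.mem_span_singleton.mpr ⟨f z, rfl⟩
    · rw [Submodule.span_le, Set.singleton_subset_iff]
      obtain ⟨z₀, hz₀1, hz₀2⟩ := exists_unit_big f (by norm_num : (0:ℝ) ≤ 1/2)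
        (by rw [hf]; norm_num)
      have hfz₀ : f z₀ ≠ 0 := by
        intro h; rw [h, norm_zero] at hz₀2; norm_num at hz₀2
      refine ⟨(f z₀)⁻¹ • z₀, ?_⟩
      show T ((f z₀)⁻¹ • z₀) = u
      rw [map_smul, hTapp, smul_smul, inv_mul_cancel₀ hfz₀, one_smul]
  have hfr : Module.finrank 𝕜 (LinearMap.range (T : X →ₗ[𝕜] X)) = 1 := by
    rw [hrange]; exact finrank_span_singleton hu0
  have hTnorm : ‖T‖ = 1 := by
    rw [hTdef, ContinuousLinearMap.norm_smulRight_apply, hf, hu, one_mul]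
  have hDT : ‖ContinuousLinearMap.id 𝕜 X - T‖ = 2 := by
    rw [hD T hfr, hTnorm]; norm_num
  obtain ⟨z, hz1, hz2⟩ := exists_unit_big (ContinuousLinearMap.id 𝕜 X - T)
    (by linarith : (0:ℝ) ≤ 2 - ε') (by rw [hDT]; linarith)
  have hz2' : 2 - ε' < ‖z - f z • u‖ := by
    have : (ContinuousLinearMap.id 𝕜 X - T) z = z - f z • u := by
      rw [ContinuousLinearMap.sub_apply, ContinuousLinearMap.id_apply, hTapp]
    rwa [this] at hz2
  set c : 𝕜 := f z with hcdef
  have hc_le : ‖c‖ ≤ 1 := by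
    have := f.le_opNorm z
    rwa [hf, one_mul, hz1] at this
  have hc_ge : 1 - ε' < ‖c‖ := by
    have h1 : ‖z - c • u‖ ≤ ‖z‖ + ‖c • u‖ := norm_sub_le _ _
    rw [hz1, norm_smul, hu, mul_one] at h1
    linarith
  obtain ⟨θ, hθ1, hθc⟩ := exists_rot c
  refine ⟨θ • z, ?_, ?_, ?_⟩
  · rw [norm_smul, hθ1, one_mul, hz1]
  · rw [map_smul, smul_eq_mul, hθc, RCLike.ofReal_re]
    linarith
  · have hkey : θ • (z - c • u) = θ • z - ((‖c‖ : ℝ) : 𝕜) • u := by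
      rw [smul_sub, smul_smul, hθc]
    have h1 : 2 - ε' < ‖θ • z - ((‖c‖ : ℝ) : 𝕜) • u‖ := by
      rw [← hkey, norm_smul, hθ1, one_mul]; exact hz2'
    have h2 : ‖((‖c‖ : ℝ) : 𝕜) • u - u‖ < ε' := by
      have : ((‖c‖ : ℝ) : 𝕜) • u - u = ((((‖c‖ - 1 : ℝ)) : 𝕜)) • u := by
        rw [RCLike.ofReal_sub, sub_smul, RCLike.ofReal_one, one_smul]
      rw [this, norm_smul, RCLike.norm_ofReal, hu, mul_one, abs_of_nonpos (by linarith)]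
      linarith
    have h3 : ‖θ • z - ((‖c‖ : ℝ) : 𝕜) • u‖ ≤ ‖θ • z - u‖ + ‖u - ((‖c‖ : ℝ) : 𝕜) • u‖ :=
      norm_sub_le_norm_sub_add_norm_sub _ _ _
    rw [norm_sub_rev u] at h3
    rw [norm_sub_rev]
    linarith

end DaugavetToPt

section PtGen

variable {𝕜 : Type*} [RCLike 𝕜] {X : Type*} [NormedAddCommGroup X] [NormedSpace 𝕜 X]

/-- generalization of `PtProp` to arbitrary points of the unit ball. -/
def PtPropGen (𝕜 : Type*) (X : Type*) [RCLike 𝕜] [NormedAddCommGroup X] [NormedSpace 𝕜 X] :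
    Prop :=
  ∀ f : X →L[𝕜] 𝕜, ‖f‖ = 1 → ∀ u : X, ‖u‖ ≤ 1 → ∀ ε : ℝ, 0 < ε →
    ∃ w : X, ‖w‖ ≤ 1 ∧ 1 - ε < RCLike.re (f w) ∧ 1 + ‖u‖ - ε < ‖u - w‖

theorem ptProp_gen (hP : PtProp 𝕜 X) : PtPropGen 𝕜 X := by
  intro f hf u hu ε hε
  rcases eq_or_ne u 0 with rfl | hu0
  · obtain ⟨w, hw1, hw2⟩ := exists_slice_point f hf (lt_min hε one_pos)
    refine ⟨w, hw1, ?_, ?_⟩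
    · have : min ε 1 ≤ ε := min_le_left _ _
      linarith
    · have h1 := re_apply_le_norm f hf w
      have : min ε 1 ≤ ε := min_le_left _ _
      rw [zero_sub, norm_neg, norm_zero]
      linarith
  · have hun : (0:ℝ) < ‖u‖ := norm_pos_iff.mpr hu0
    set u' : X := ((‖u‖⁻¹ : ℝ) : 𝕜) • u with hu'def
    have hu'1 : ‖u'‖ = 1 := by
      rw [hu'def, norm_smul, RCLike.norm_ofReal, abs_of_pos (by positivity)]
      field_simp
    obtain ⟨w, hw1, hw2, hw3⟩ := hP f hf u' hu'1 ε hε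
    refine ⟨w, hw1, hw2, ?_⟩
    have hdist : ‖u' - u‖ = 1 - ‖u‖ := by
      have : u' - u = ((((‖u‖⁻¹ - 1 : ℝ)) : 𝕜)) • u := by
        rw [RCLike.ofReal_sub, sub_smul, RCLike.ofReal_one, one_smul, hu'def]
      rw [this, norm_smul, RCLike.norm_ofReal]
      rw [abs_of_nonneg (by
        have : (1:ℝ) ≤ ‖u‖⁻¹ := (one_le_inv₀ hun).mpr hu
        linarith)]
      rw [sub_mul, inv_mul_cancel₀ (ne_of_gt hun), one_mul]
    have h3 : ‖u' - w‖ ≤ ‖u' - u‖ + ‖u - w‖ := norm_sub_le_norm_sub_add_norm_sub _ _ _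
    rw [hdist] at h3
    linarith

end PtGen

section Induction

variable {𝕜 : Type*} [RCLike 𝕜] {X : Type*} [NormedAddCommGroup X] [NormedSpace 𝕜 X]

set_option maxHeartbeats 2000000 in
/-- The key induction: given finitely many slices and a point `u` of the ball, there is a
functional almost norming `u` and points of the slices where it is almost `-1`. -/
lemma exists_far_functional (hP : PtPropGen 𝕜 X) (x0 : X) (hx0 : x0 ≠ 0) :
    ∀ (n : ℕ) (f : Fin n → (X →L[𝕜] 𝕜)) (α : Fin n → ℝ), (∀ i, ‖f i‖ = 1) →
    (∀ i, 0 < α i) → ∀ (u : X), ‖u‖ ≤ 1 → ∀ ε : ℝ, 0 < ε →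
    ∃ (h : X →L[𝕜] 𝕜) (w : Fin n → X), ‖h‖ = 1 ∧ (∀ i, w i ∈ ballSlice (f i) (α i)) ∧
      ‖u‖ - ε < RCLike.re (h u) ∧ ∀ i, RCLike.re (h (w i)) < -(1 - ε) := by
  intro n
  induction n with
  | zero =>
    intro f α hf hα u hu ε hε
    rcases eq_or_ne u 0 with rfl | hu0
    · obtain ⟨h, hh1, hhv⟩ := exists_norming (𝕜 := 𝕜) x0 hx0
      exact ⟨h, fun i => i.elim0, hh1, fun i => i.elim0, by simp; linarith, fun i => i.elim0⟩
    · obtain ⟨h, hh1, hhv⟩ := exists_norming (𝕜 := 𝕜) u hu0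
      exact ⟨h, fun i => i.elim0, hh1, fun i => i.elim0, by rw [hhv]; linarith, fun i => i.elim0⟩
  | succ n IH =>
    intro f α hf hα u hu ε hε
    set εm : ℝ := min ε 1 with hεmdef
    have hεm0 : 0 < εm := lt_min hε one_pos
    have hεm1 : εm ≤ 1 := min_le_right _ _
    have hεmε : εm ≤ ε := min_le_left _ _
    set ε' : ℝ := εm / 4 with hε'def
    have hε'0 : 0 < ε' := by positivity
    have hε'4 : ε' ≤ 1 / 4 := by simp only [hε'def]; linarith
    obtain ⟨w₀, hw₀1, hw₀2, hw₀3⟩ := hP (f 0) (hf 0) u hu (min (α 0) ε')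
      (lt_min (hα 0) hε'0)
    have hw₀S : w₀ ∈ ballSlice (f 0) (α 0) := by
      refine ⟨hw₀1, lt_of_le_of_lt ?_ hw₀2⟩
      have : min (α 0) ε' ≤ α 0 := min_le_left _ _
      linarith
    have hw₀3' : 1 + ‖u‖ - ε' < ‖u - w₀‖ := by
      have : min (α 0) ε' ≤ ε' := min_le_right _ _
      linarith
    have hr0 : (0:ℝ) < ‖u - w₀‖ := by
      have := norm_nonneg u
      linarith
    set r : ℝ := ‖u - w₀‖ with hrdef
    set u' : X := ((r⁻¹ : ℝ) : 𝕜) • (u - w₀) with hu'def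
    have hu'1 : ‖u'‖ = 1 := by
      rw [hu'def, norm_smul, RCLike.norm_ofReal, abs_of_pos (by positivity), ← hrdef]
      field_simp
    obtain ⟨h, w', hh1, hw'S, hhu', hhw'⟩ := IH (fun i => f i.succ) (fun i => α i.succ)
      (fun i => hf i.succ) (fun i => hα i.succ) u' (le_of_eq hu'1) ε' hε'0
    rw [hu'1] at hhu'
    have hru' : ((r : ℝ) : 𝕜) • u' = u - w₀ := by
      rw [hu'def, smul_smul, ← RCLike.ofReal_mul, mul_inv_cancel₀ (ne_of_gt hr0)]
      simp
    have hkey : RCLike.re (h (u - w₀)) = r * RCLike.re (h u') := by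
      rw [← hru', map_smul, smul_eq_mul, RCLike.re_ofReal_mul]
    have hbig : 1 + ‖u‖ - 3 * ε' < RCLike.re (h (u - w₀)) := by
      rw [hkey]
      have h1 : r * (1 - ε') < r * RCLike.re (h u') :=
        mul_lt_mul_of_pos_left hhu' hr0
      have h2 : (1 + ‖u‖ - ε') * (1 - ε') ≤ r * (1 - ε') :=
        mul_le_mul_of_nonneg_right (le_of_lt hw₀3') (by linarith)
      nlinarith [norm_nonneg u, hu]
    have hsplit : RCLike.re (h u) = RCLike.re (h (u - w₀)) + RCLike.re (h w₀) := by
      rw [map_sub, map_sub]; ring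
    have hhw₀neg : -(1:ℝ) ≤ RCLike.re (h w₀) := by
      have := neg_norm_le_re_apply h hh1 w₀; linarith
    have hhu_le : RCLike.re (h u) ≤ ‖u‖ := re_apply_le_norm h hh1 u
    refine ⟨h, Fin.cons w₀ w', hh1, ?_, ?_, ?_⟩
    · intro i
      refine Fin.cases ?_ ?_ i
      · rw [Fin.cons_zero]; exact hw₀S
      · intro j; rw [Fin.cons_succ]; exact hw'S j
    · have : ‖u‖ - 3 * ε' < RCLike.re (h u) := by
        rw [hsplit]; linarith
      linarith
    · intro i
      refine Fin.cases ?_ ?_ i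
      · rw [Fin.cons_zero]
        have : RCLike.re (h w₀) < -(1 - 3 * ε') := by
          rw [hsplit] at hhu_le; linarith
        linarith
      · intro j; rw [Fin.cons_succ]
        have := hhw' j
        linarith

set_option maxHeartbeats 2000000 in
theorem ptPropGen_to_dsd2p (hP : PtPropGen 𝕜 X) : DSD2P 𝕜 X := by
  intro C hC δ hδ x hx
  obtain ⟨n, hn, f, α, lam, hf, hα, hlam, hsum, hCeq⟩ := hC
  subst hCeq
  obtain ⟨y, hy, rfl⟩ := hx
  have hx0 : ∃ x0 : X, x0 ≠ 0 := by
    by_contra hcon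
    push_neg at hcon
    have hzero : f ⟨0, hn⟩ = 0 := by
      ext z; rw [hcon z]; simp
    have := hf ⟨0, hn⟩
    rw [hzero, norm_zero] at this
    norm_num at this
  obtain ⟨x0, hx0⟩ := hx0
  have hxle : ‖∑ i, (lam i : 𝕜) • y i‖ ≤ 1 := by
    calc ‖∑ i, (lam i : 𝕜) • y i‖ ≤ ∑ i, ‖(lam i : 𝕜) • y i‖ := norm_sum_le _ _
    _ ≤ ∑ i, lam i := by
        refine Finset.sum_le_sum (fun i _ => ?_)
        rw [norm_smul, RCLike.norm_ofReal, abs_of_pos (hlam i)]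
        exact mul_le_of_le_one_right (le_of_lt (hlam i)) (hy i).1
    _ = 1 := hsum
  obtain ⟨h, w, hh1, hwS, hhx, hhw⟩ := exists_far_functional hP x0 hx0 n f α hf hα
    (∑ i, (lam i : 𝕜) • y i) hxle (δ / 3) (by positivity)
  refine ⟨∑ i, (lam i : 𝕜) • w i, ⟨w, hwS, rfl⟩, ?_⟩
  have hrey : RCLike.re (h (∑ i, (lam i : 𝕜) • w i)) = ∑ i, lam i * RCLike.re (h (w i)) := by
    have h1 : h (∑ i, (lam i : 𝕜) • w i) = ∑ i, (lam i : 𝕜) * h (w i) := by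
      rw [map_sum]
      exact Finset.sum_congr rfl (fun i _ => by rw [map_smul, smul_eq_mul])
    rw [h1, map_sum]
    exact Finset.sum_congr rfl (fun i _ => RCLike.re_ofReal_mul _ _)
  have hne : (Finset.univ : Finset (Fin n)).Nonempty := ⟨⟨0, hn⟩, Finset.mem_univ _⟩
  have hsumlt : ∑ i, lam i * RCLike.re (h (w i)) < ∑ i, lam i * (-(1 - δ / 3)) :=
    Finset.sum_lt_sum_of_nonempty hne
      (fun i _ => mul_lt_mul_of_pos_left (hhw i) (hlam i))
  have hsumeq : ∑ i, lam i * (-(1 - δ / 3)) = -(1 - δ / 3) := by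
    rw [← Finset.sum_mul, hsum, one_mul]
  have hre_diff : RCLike.re (h (∑ i, (lam i : 𝕜) • y i - ∑ i, (lam i : 𝕜) • w i))
      = RCLike.re (h (∑ i, (lam i : 𝕜) • y i)) - RCLike.re (h (∑ i, (lam i : 𝕜) • w i)) := by
    rw [map_sub, map_sub]
  have hfinal := re_apply_le_norm h hh1 (∑ i, (lam i : 𝕜) • y i - ∑ i, (lam i : 𝕜) • w i)
  rw [hre_diff, hrey] at hfinal
  have : 1 + ‖∑ i, (lam i : 𝕜) • y i‖ - δ
      < RCLike.re (h (∑ i, (lam i : 𝕜) • y i)) - ∑ i, lam i * RCLike.re (h (w i)) := by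
    rw [hsumeq] at hsumlt
    linarith
  linarith

end Induction


/-- A Banach space `X` has the DSD2P if and only if `X` has the Daugavet property,
i.e. iff every rank-one bounded linear operator `T : X → X` satisfies
`‖Id - T‖ = 1 + ‖T‖`. -/
theorem dsd2p_iff_daugavet_property {𝕜 : Type*} [RCLike 𝕜] {X : Type*}
    [NormedAddCommGroup X] [NormedSpace 𝕜 X] [CompleteSpace X] :
    DSD2P 𝕜 X ↔
      ∀ T : X →L[𝕜] X, Module.finrank 𝕜 (LinearMap.range (T : X →ₗ[𝕜] X)) = 1 →
        ‖ContinuousLinearMap.id 𝕜 X - T‖ = 1 + ‖T‖ := by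
  constructor
  · intro H T hT
    exact ptProp_to_daugavet (dsd2p_to_ptProp H) T hT
  · intro H
    exact ptPropGen_to_dsd2p (ptProp_gen (daugavet_to_ptProp H))
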